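/- Let q be a prime and 0 ≤ p ≤ q − 1. For each n ≥ 1 let fₙ be a unimodal probability distribution on {0, …, qⁿ − 2}: fₙ(m) ≥ 0 for all m, Σ_{m=0}^{qⁿ−2} fₙ(m) = 1, and there exists cₙ ∈ {0, …, qⁿ − 2} such that fₙ is nondecreasing on {0, …, cₙ} and nonincreasing on {cₙ, …, qⁿ − 2}. Let M_p(n) = {m : 0 ≤ m ≤ qⁿ − 2 and C(qⁿ − 2, m) ≡ p (mod q)}. If max{fₙ(m) : 0 ≤ m ≤ qⁿ − 2} → 0 as n → ∞, then Σ_{m ∈ M_p(n)} fₙ(m) → 1/q as n → ∞. -/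

import Mathlib

open Filter


lemma choose_pow_sub_one (q n : ℕ) (hq : q.Prime) :
    ∀ m, m ≤ q ^ n - 1 → (((q ^ n - 1).choose m : ℕ) : ZMod q) = (-1) ^ m := by
  have hq1 : 1 ≤ q ^ n := Nat.one_le_pow _ _ hq.pos
  intro m
  induction m with
  | zero => simp
  | succ m ih =>
    intro hm
    have hm' : m ≤ q ^ n - 1 := by omega
    have hdvd : q ∣ (q ^ n).choose (m + 1) :=
      hq.dvd_choose_pow (by omega) (by omega)
    have hpascal : (q ^ n).choose (m + 1) = (q ^ n - 1).choose m + (q ^ n - 1).choose (m + 1) := by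
      have h : q ^ n = (q ^ n - 1) + 1 := by omega
      conv_lhs => rw [h]
      rw [Nat.choose_succ_succ]
    have h0 : (((q ^ n).choose (m + 1) : ℕ) : ZMod q) = 0 := by
      exact_mod_cast (ZMod.natCast_eq_zero_iff _ _).mpr hdvd
    rw [hpascal] at h0
    push_cast at h0
    rw [ih hm'] at h0
    have : (((q ^ n - 1).choose (m + 1) : ℕ) : ZMod q) = -(-1) ^ m := by linear_combination h0
    rw [this]; ring

lemma choose_pow_sub_two (q n : ℕ) (hq : q.Prime) (hn : 1 ≤ n) :
    ∀ m, m ≤ q ^ n - 2 → (((q ^ n - 2).choose m : ℕ) : ZMod q) = (-1) ^ m * ((m : ZMod q) + 1) := by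
  have hq2 : 2 ≤ q ^ n := by
    calc 2 ≤ q := hq.two_le
    _ ≤ q ^ n := Nat.le_self_pow (by omega) _
  intro m
  induction m with
  | zero => simp
  | succ m ih =>
    intro hm
    have hm' : m ≤ q ^ n - 2 := by omega
    have hpascal : (q ^ n - 1).choose (m + 1) = (q ^ n - 2).choose m + (q ^ n - 2).choose (m + 1) := by
      have h : q ^ n - 1 = (q ^ n - 2) + 1 := by omega
      conv_lhs => rw [h]
      rw [Nat.choose_succ_succ]
    have h1 : (((q ^ n - 1).choose (m + 1) : ℕ) : ZMod q) = (-1) ^ (m + 1) :=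
      choose_pow_sub_one q n hq (m + 1) (by omega)
    rw [hpascal] at h1
    push_cast at h1
    rw [ih hm'] at h1
    push_cast
    linear_combination h1 - (m + 2 : ZMod q) * pow_succ (-1 : ZMod q) m

-- invariance of the condition under mod 2q
lemma cond_mod (q p : ℕ) (hq : q.Prime) (m : ℕ) :
    ((-1 : ZMod q) ^ m * ((m : ZMod q) + 1) = (p : ZMod q)) ↔
    ((-1 : ZMod q) ^ (m % (2 * q)) * (((m % (2 * q) : ℕ) : ZMod q) + 1) = (p : ZMod q)) := by
  have h1 : ((-1 : ZMod q)) ^ m = (-1) ^ (m % (2 * q)) := by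
    have h2 : m % 2 = (m % (2 * q)) % 2 := (Nat.mod_mod_of_dvd m ⟨q, rfl⟩).symm
    have key : ∀ a : ℕ, (-1 : ZMod q) ^ a = (-1) ^ (a % 2) := by
      intro a
      conv_lhs => rw [← Nat.div_add_mod a 2]
      rw [pow_add, pow_mul]
      simp
    rw [key m, key (m % (2*q)), h2]
  have h3 : ((m % (2 * q) : ℕ) : ZMod q) = (m : ZMod q) := by
    conv_rhs => rw [← Nat.div_add_mod m (2 * q)]
    push_cast
    rw [ZMod.natCast_self]
    ring
  rw [h1, h3]

-- every window of length 2q has the same count as range (2q)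
lemma window_count (q p : ℕ) (hq : q.Prime) (n : ℕ) :
    ((Finset.Ico n (n + 2 * q)).filter
        (fun (m : ℕ) => (-1 : ZMod q) ^ m * ((m : ZMod q) + 1) = (p : ZMod q))).card
      = ((Finset.range (2 * q)).filter
        (fun (m : ℕ) => (-1 : ZMod q) ^ m * ((m : ZMod q) + 1) = (p : ZMod q))).card := by
  have hq0 : 0 < 2 * q := by have := hq.two_le; omega
  apply Finset.card_bij (fun m _ => m % (2 * q))
  · intro a ha
    simp only [Finset.mem_filter, Finset.mem_Ico] at ha
    simp only [Finset.mem_filter, Finset.mem_range]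
    exact ⟨Nat.mod_lt _ hq0, ((cond_mod q p hq a).mp ha.2)⟩
  · intro a ha b hb hab
    simp only [Finset.mem_filter, Finset.mem_Ico] at ha hb
    rcases le_total a b with h | h
    · have : a ≡ b [MOD 2*q] := by unfold Nat.ModEq; omega
      have hd := (Nat.modEq_iff_dvd' h).mp this
      rcases hd with ⟨k, hk⟩
      rcases Nat.eq_zero_or_pos k with rfl | hk1
      · simp at hk; omega
      · have h5 : 2*q*1 ≤ 2*q*k := Nat.mul_le_mul_left _ hk1
        rw [mul_one] at h5
        omega
    · have : b ≡ a [MOD 2*q] := by unfold Nat.ModEq; omega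
      have hd := (Nat.modEq_iff_dvd' h).mp this
      rcases hd with ⟨k, hk⟩
      rcases Nat.eq_zero_or_pos k with rfl | hk1
      · simp at hk; omega
      · have h5 : 2*q*1 ≤ 2*q*k := Nat.mul_le_mul_left _ hk1
        rw [mul_one] at h5
        omega
  · intro s hs
    simp only [Finset.mem_filter, Finset.mem_range] at hs
    set k := n / (2 * q) with hkdef
    set t := n % (2 * q) with htdef
    have hnt : n = 2 * q * k + t := (Nat.div_add_mod n (2*q)).symm
    have ht : t < 2 * q := Nat.mod_lt _ hq0
    have hexp : 2*q*(k+1) = 2*q*k + 2*q := by ring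
    refine ⟨if t ≤ s then 2*q*k + s else 2*q*(k+1) + s, ?_, ?_⟩
    · have hmod : (if t ≤ s then 2*q*k + s else 2*q*(k+1) + s) % (2*q) = s := by
        split <;> rw [Nat.mul_add_mod] <;> exact Nat.mod_eq_of_lt hs.1
      simp only [Finset.mem_filter, Finset.mem_Ico]
      refine ⟨⟨?_, ?_⟩, ?_⟩
      · split <;> omega
      · split <;> omega
      · rw [cond_mod q p hq, hmod]; exact hs.2
    · split <;> rw [Nat.mul_add_mod] <;> exact Nat.mod_eq_of_lt hs.1

lemma same_res (q : ℕ) (hodd : q % 2 = 1) (a b : ℕ) (ha : a < 2*q) (hb : b < 2*q)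
    (hpar : a % 2 = b % 2) (hcong : a ≡ b [MOD q]) : a = b := by
  rcases le_total a b with h | h
  · obtain ⟨k, hk⟩ := (Nat.modEq_iff_dvd' h).mp hcong
    have hk2 : k < 2 := by
      by_contra hc
      push_neg at hc
      have h5 : q*2 ≤ q*k := Nat.mul_le_mul_left _ hc
      omega
    interval_cases k <;> simp at hk <;> omega
  · obtain ⟨k, hk⟩ := (Nat.modEq_iff_dvd' h).mp hcong.symm
    have hk2 : k < 2 := by
      by_contra hc
      push_neg at hc
      have h5 : q*2 ≤ q*k := Nat.mul_le_mul_left _ hc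
      omega
    interval_cases k <;> simp at hk <;> omega

lemma range_count (q p : ℕ) (hq : q.Prime) (hp : p ≤ q - 1) :
    ((Finset.range (2*q)).filter
      (fun (m : ℕ) => (-1 : ZMod q) ^ m * ((m : ZMod q) + 1) = (p : ZMod q))).card = 2 := by
  rcases eq_or_ne q 2 with rfl | hq2
  · interval_cases p <;> decide
  · have hodd : q % 2 = 1 := Nat.odd_iff.mp (hq.odd_of_ne_two hq2)
    have hq1 : 2 ≤ q := hq.two_le
    have hcond_even : ∀ s : ℕ, s % 2 = 0 →
        (((-1 : ZMod q) ^ s * ((s : ZMod q) + 1) = (p : ZMod q)) ↔ (s+1) ≡ p [MOD q]) := by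
      intro s hs
      have : (-1 : ZMod q) ^ s = 1 := Even.neg_one_pow (Nat.even_iff.mpr hs)
      rw [this, one_mul, ← Nat.cast_one, ← Nat.cast_add, ZMod.natCast_eq_natCast_iff]
    have hcond_odd : ∀ s : ℕ, s % 2 = 1 →
        (((-1 : ZMod q) ^ s * ((s : ZMod q) + 1) = (p : ZMod q)) ↔ q ∣ (s + 1 + p)) := by
      intro s hs
      have h1 : (-1 : ZMod q) ^ s = -1 := Odd.neg_one_pow (Nat.odd_iff.mpr hs)
      rw [h1]
      rw [← ZMod.natCast_eq_zero_iff]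
      constructor
      · intro h; push_cast; linear_combination -h
      · intro h; push_cast at h; linear_combination -h
    set u := (p + q - 1) % q with hu_def
    have hu : u < q := Nat.mod_lt _ (by omega)
    have huc : u ≡ p + q - 1 [MOD q] := Nat.mod_modEq _ _
    set e := if u % 2 = 0 then u else u + q with he_def
    have he2q : e < 2*q := by rw [he_def]; split <;> omega
    have hepar : e % 2 = 0 := by rw [he_def]; split <;> omega
    have hece : e ≡ u [MOD q] := by
      rw [he_def]; split
      · rfl
      · show (u + q) % q = u % q
        exact Nat.add_mod_right u q
    have hecong : (e + 1) ≡ p [MOD q] := by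
      have h1 : e + 1 ≡ u + 1 [MOD q] := hece.add_right 1
      have h2 : u + 1 ≡ (p + q - 1) + 1 [MOD q] := huc.add_right 1
      have h3 : (p + q - 1) + 1 = p + q := by omega
      have h4 : p + q ≡ p + 0 [MOD q] :=
        (Nat.ModEq.refl p).add (Nat.modEq_zero_iff_dvd.mpr dvd_rfl)
      calc e + 1 ≡ u + 1 [MOD q] := h1
        _ ≡ (p + q - 1) + 1 [MOD q] := h2
        _ = p + q := h3
        _ ≡ p + 0 [MOD q] := h4
        _ = p := by omega
    set v := q - 1 - p with hv_def
    set o := if v % 2 = 1 then v else v + q with ho_def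
    have hv : v < q := by omega
    have ho2q : o < 2*q := by rw [ho_def]; split <;> omega
    have hopar : o % 2 = 1 := by rw [ho_def]; split <;> omega
    have hodvd : q ∣ (o + 1 + p) := by
      have hvq : v + 1 + p = q := by omega
      rw [ho_def]; split
      · exact ⟨1, by omega⟩
      · exact ⟨2, by omega⟩
    have hne : e ≠ o := by omega
    have hset : ((Finset.range (2*q)).filter
        (fun (m : ℕ) => (-1 : ZMod q) ^ m * ((m : ZMod q) + 1) = (p : ZMod q))) = {e, o} := by
      ext s
      simp only [Finset.mem_filter, Finset.mem_range, Finset.mem_insert, Finset.mem_singleton]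
      constructor
      · rintro ⟨hs2q, hcond⟩
        rcases Nat.even_or_odd s with hev | hod
        · left
          have hse : s % 2 = 0 := Nat.even_iff.mp hev
          have h1 : (s+1) ≡ p [MOD q] := (hcond_even s hse).mp hcond
          have h2 : s + 1 ≡ e + 1 [MOD q] := h1.trans hecong.symm
          exact same_res q hodd s e hs2q he2q (by omega) (h2.add_right_cancel' 1)
        · right
          have hso : s % 2 = 1 := Nat.odd_iff.mp hod
          have h1 : q ∣ (s + 1 + p) := (hcond_odd s hso).mp hcond
          have h2 : s + 1 + p ≡ o + 1 + p [MOD q] :=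
            (Nat.modEq_zero_iff_dvd.mpr h1).trans (Nat.modEq_zero_iff_dvd.mpr hodvd).symm
          have h3 : s + (1 + p) ≡ o + (1 + p) [MOD q] := by
            rwa [← add_assoc, ← add_assoc]
          exact same_res q hodd s o hs2q ho2q (by omega) (h3.add_right_cancel' _)
      · rintro (rfl | rfl)
        · exact ⟨he2q, (hcond_even _ hepar).mpr hecong⟩
        · exact ⟨ho2q, (hcond_odd _ hopar).mpr hodvd⟩
    rw [hset]
    rw [Finset.card_insert_of_notMem (by simp [hne]), Finset.card_singleton]

lemma abel_identity (w g : ℕ → ℝ) (T : ℕ) :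
    ∑ m ∈ Finset.range T, w m * g m
      = (∑ m ∈ Finset.range T, w m) * g T
        + ∑ j ∈ Finset.range T, (g j - g (j+1)) * (∑ m ∈ Finset.range (j+1), w m) := by
  induction T with
  | zero => simp
  | succ T ih =>
    rw [Finset.sum_range_succ, ih, Finset.sum_range_succ (fun j => (g j - g (j+1)) * _),
      Finset.sum_range_succ w]
    ring

lemma mono_piece_bound (w g : ℕ → ℝ) (B ε : ℝ) (T : ℕ)
    (hW : ∀ n, |∑ m ∈ Finset.range n, w m| ≤ B)
    (hg0 : ∀ j, j ≤ T → 0 ≤ g j) (hgε : ∀ j, j ≤ T → g j ≤ ε)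
    (hmono : (∀ a b, a ≤ b → b ≤ T → g a ≤ g b) ∨ (∀ a b, a ≤ b → b ≤ T → g b ≤ g a)) :
    |∑ m ∈ Finset.range T, w m * g m| ≤ 2 * B * ε := by
  have hB : 0 ≤ B := le_trans (abs_nonneg _) (hW 0)
  have hε : 0 ≤ ε := le_trans (hg0 T le_rfl) (hgε T le_rfl)
  rw [abel_identity]
  have h1 : |(∑ m ∈ Finset.range T, w m) * g T| ≤ B * ε := by
    rw [abs_mul]
    exact mul_le_mul (hW T) (by rw [abs_of_nonneg (hg0 T le_rfl)]; exact hgε T le_rfl)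
      (abs_nonneg _) hB
  have h2 : |∑ j ∈ Finset.range T, (g j - g (j+1)) * (∑ m ∈ Finset.range (j+1), w m)| ≤ B * ε := by
    calc |∑ j ∈ Finset.range T, (g j - g (j+1)) * (∑ m ∈ Finset.range (j+1), w m)|
        ≤ ∑ j ∈ Finset.range T, |(g j - g (j+1)) * (∑ m ∈ Finset.range (j+1), w m)| :=
          Finset.abs_sum_le_sum_abs _ _
      _ ≤ ∑ j ∈ Finset.range T, |g j - g (j+1)| * B := by
          apply Finset.sum_le_sum
          intro j hj
          rw [abs_mul]
          exact mul_le_mul_of_nonneg_left (hW (j+1)) (abs_nonneg _)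
      _ = (∑ j ∈ Finset.range T, |g j - g (j+1)|) * B := by rw [Finset.sum_mul]
      _ ≤ ε * B := by
          apply mul_le_mul_of_nonneg_right _ hB
          rcases hmono with hm | hm
          · have : ∀ j ∈ Finset.range T, |g j - g (j+1)| = g (j+1) - g j := by
              intro j hj
              rw [Finset.mem_range] at hj
              rw [abs_of_nonpos (by linarith [hm j (j+1) (by omega) (by omega)])]
              ring
            rw [Finset.sum_congr rfl this, Finset.sum_range_sub]
            have := hg0 0 (by omega)
            have := hgε T le_rfl
            linarith
          · have : ∀ j ∈ Finset.range T, |g j - g (j+1)| = g j - g (j+1) := by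
              intro j hj
              rw [Finset.mem_range] at hj
              rw [abs_of_nonneg (by linarith [hm j (j+1) (by omega) (by omega)])]
            rw [Finset.sum_congr rfl this, Finset.sum_range_sub']
            have := hg0 T le_rfl
            have h0T := hgε 0 (by omega)
            linarith
      _ = B * ε := by ring
  calc |(∑ m ∈ Finset.range T, w m) * g T
        + ∑ j ∈ Finset.range T, (g j - g (j+1)) * (∑ m ∈ Finset.range (j+1), w m)|
      ≤ _ + _ := abs_add_le _ _
    _ ≤ B * ε + B * ε := add_le_add h1 h2
    _ = 2 * B * ε := by ring

noncomputable def Wf (q p n : ℕ) : ℝ :=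
  ∑ m ∈ Finset.range n,
    ((if (-1 : ZMod q) ^ m * ((m : ZMod q) + 1) = (p : ZMod q) then (1:ℝ) else 0) - 1/q)

lemma Wf_per (q p : ℕ) (hq : q.Prime) (hp : p ≤ q - 1) (n : ℕ) :
    Wf q p (n + 2*q) = Wf q p n := by
  have hsplit : Wf q p (n + 2*q) = Wf q p n + ∑ m ∈ Finset.Ico n (n + 2*q),
      ((if (-1 : ZMod q) ^ m * ((m : ZMod q) + 1) = (p : ZMod q) then (1:ℝ) else 0) - 1/q) := by
    unfold Wf
    rw [Finset.range_eq_Ico,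
      ← Finset.sum_Ico_consecutive _ (Nat.zero_le n) (Nat.le_add_right n (2*q)), ← Finset.range_eq_Ico]
  rw [hsplit]
  have h1 : ∑ m ∈ Finset.Ico n (n + 2*q),
      ((if (-1 : ZMod q) ^ m * ((m : ZMod q) + 1) = (p : ZMod q) then (1:ℝ) else 0) - 1/q)
      = ((Finset.Ico n (n + 2*q)).filter
          (fun (m : ℕ) => (-1 : ZMod q) ^ m * ((m : ZMod q) + 1) = (p : ZMod q))).card
        - (2*q : ℝ) * (1/q) := by
    rw [Finset.sum_sub_distrib, Finset.sum_boole, Finset.sum_const, Nat.card_Ico]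
    simp
  rw [h1, window_count q p hq, range_count q p hq hp]
  have hqpos : (0:ℝ) < q := by exact_mod_cast hq.pos
  field_simp
  norm_num

lemma Wf_bound (q p : ℕ) (hq : q.Prime) (hp : p ≤ q - 1) (n : ℕ) :
    |Wf q p n| ≤ 2 := by
  have hqpos : (0:ℝ) < q := by exact_mod_cast hq.pos
  have key : ∀ n, Wf q p n = Wf q p (n % (2*q)) := by
    intro n
    induction n using Nat.strong_induction_on with
    | _ n ih =>
      rcases Nat.lt_or_ge n (2*q) with h | h
      · rw [Nat.mod_eq_of_lt h]
      · obtain ⟨m, rfl⟩ : ∃ m, n = m + 2*q := ⟨n - 2*q, by omega⟩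
        rw [Wf_per q p hq hp, ih m (by have := hq.two_le; omega), Nat.add_mod_right]
  rw [key n]
  set t := n % (2*q) with ht_def
  have ht : t < 2*q := Nat.mod_lt _ (by have := hq.two_le; omega)
  have heq : Wf q p t = ((Finset.range t).filter
      (fun (m : ℕ) => (-1 : ZMod q) ^ m * ((m : ZMod q) + 1) = (p : ZMod q))).card
      - (t : ℝ) * (1/q) := by
    unfold Wf
    rw [Finset.sum_sub_distrib, Finset.sum_boole, Finset.sum_const, Finset.card_range]
    simp
  rw [heq]
  have hcard : ((Finset.range t).filter
      (fun (m : ℕ) => (-1 : ZMod q) ^ m * ((m : ZMod q) + 1) = (p : ZMod q))).card ≤ 2 := by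
    rw [← range_count q p hq hp]
    exact Finset.card_le_card (Finset.filter_subset_filter _
      (Finset.range_subset_range.mpr (le_of_lt ht)))
  have hcard' : (((Finset.range t).filter
      (fun (m : ℕ) => (-1 : ZMod q) ^ m * ((m : ZMod q) + 1) = (p : ZMod q))).card : ℝ) ≤ 2 := by
    exact_mod_cast hcard
  have htq : (t : ℝ) * (1/q) ≤ 2 := by
    rw [mul_one_div, div_le_iff₀ hqpos]
    have : (t:ℝ) ≤ 2*q := by exact_mod_cast ht.le
    linarith
  rw [abs_le]
  constructor
  · have : (0:ℝ) ≤ (((Finset.range t).filter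
      (fun (m : ℕ) => (-1 : ZMod q) ^ m * ((m : ZMod q) + 1) = (p : ZMod q))).card : ℝ) :=
      Nat.cast_nonneg _
    linarith
  · have : (0:ℝ) ≤ (t : ℝ) * (1/q) := by positivity
    linarith



open Filter

theorem stmt10 (q : ℕ) (hq : q.Prime) (p : ℕ) (hp : p ≤ q - 1)
    (f : ℕ → ℕ → ℝ)
    (hnonneg : ∀ n, 1 ≤ n → ∀ m, 0 ≤ f n m)
    (hsum : ∀ n, 1 ≤ n → ∑ m ∈ Finset.range (q ^ n - 1), f n m = 1)
    (hunimodal : ∀ n, 1 ≤ n → ∃ c, c ≤ q ^ n - 2 ∧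
      (∀ a b, a ≤ b → b ≤ c → f n a ≤ f n b) ∧
      (∀ a b, c ≤ a → a ≤ b → b ≤ q ^ n - 2 → f n b ≤ f n a))
    (hmax : ∀ ε : ℝ, 0 < ε → ∃ N, ∀ n, N ≤ n → ∀ m, m ≤ q ^ n - 2 → f n m < ε) :
    Tendsto
      (fun n : ℕ => ∑ m ∈ (Finset.range (q ^ n - 1)).filter
          (fun m => ((Nat.choose (q ^ n - 2) m : ℕ) : ZMod q) = (p : ZMod q)), f n m)
      atTop (nhds (1 / (q : ℝ))) := by
  have hq2 : 2 ≤ q := hq.two_le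
  rw [Metric.tendsto_atTop]
  intro ε' hε'
  set ε : ℝ := ε' / 15 with hε_def
  have hεpos : 0 < ε := by positivity
  obtain ⟨N1, hN1⟩ := hmax ε hεpos
  refine ⟨max N1 1, fun n hn => ?_⟩
  have hn1 : 1 ≤ n := le_trans (le_max_right _ _) hn
  have hnN1 : N1 ≤ n := le_trans (le_max_left _ _) hn
  have hqn2 : 2 ≤ q ^ n := le_trans hq2 (Nat.le_self_pow (by omega) _)
  set T := q ^ n - 2 with hT_def
  have hNT : q ^ n - 1 = T + 1 := by omega
  obtain ⟨c, hcT, hinc, hdec⟩ := hunimodal n hn1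
  set w : ℕ → ℝ := fun m =>
    (if (-1 : ZMod q) ^ m * ((m : ZMod q) + 1) = (p : ZMod q) then (1:ℝ) else 0) - 1/q
    with hw_def
  have hWf : ∀ k, (∑ m ∈ Finset.range k, w m) = Wf q p k := by
    intro k; rfl
  have hW2 : ∀ k, |∑ m ∈ Finset.range k, w m| ≤ 2 := by
    intro k; rw [hWf]; exact Wf_bound q p hq hp k
  have hfε : ∀ m, m ≤ T → f n m ≤ ε := fun m hm => (hN1 n hnN1 m hm).le
  have hf0 : ∀ m, 0 ≤ f n m := hnonneg n hn1
  -- Step A: rewrite the filter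
  have hfilter : (Finset.range (q ^ n - 1)).filter
      (fun m => ((Nat.choose (q ^ n - 2) m : ℕ) : ZMod q) = (p : ZMod q))
      = (Finset.range (q ^ n - 1)).filter
      (fun (m : ℕ) => (-1 : ZMod q) ^ m * ((m : ZMod q) + 1) = (p : ZMod q)) := by
    apply Finset.filter_congr
    intro m hm
    rw [Finset.mem_range] at hm
    rw [choose_pow_sub_two q n hq hn1 m (by omega)]
  -- Step B
  have hstepB : ∑ m ∈ (Finset.range (q ^ n - 1)).filter
      (fun (m : ℕ) => (-1 : ZMod q) ^ m * ((m : ZMod q) + 1) = (p : ZMod q)), f n m - 1 / q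
      = ∑ m ∈ Finset.range (q ^ n - 1), w m * f n m := by
    have h1 : ∑ m ∈ Finset.range (q ^ n - 1), w m * f n m
        = ∑ m ∈ Finset.range (q ^ n - 1),
            ((if (-1 : ZMod q) ^ m * ((m : ZMod q) + 1) = (p : ZMod q) then f n m else 0)
              - (1/q) * f n m) := by
      apply Finset.sum_congr rfl
      intro m hm
      by_cases hC : (-1 : ZMod q) ^ m * ((m : ZMod q) + 1) = (p : ZMod q)
      · simp only [hw_def, if_pos hC]; ring
      · simp only [hw_def, if_neg hC]; ring
    rw [h1, Finset.sum_sub_distrib, ← Finset.sum_filter, ← Finset.mul_sum, hsum n hn1]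
    ring
  -- Step C: split the sum
  have hcN : c ≤ q ^ n - 1 := by omega
  have hsplit : ∑ m ∈ Finset.range (q ^ n - 1), w m * f n m
      = (∑ m ∈ Finset.range c, w m * f n m)
        + (∑ j ∈ Finset.range (T - c), w (c + j) * f n (c + j))
        + w T * f n T := by
    have e1 : ∑ m ∈ Finset.range (q ^ n - 1), w m * f n m
        = ∑ m ∈ Finset.range T, w m * f n m + w T * f n T := by
      rw [hNT, Finset.sum_range_succ]
    have e3 : ∑ m ∈ Finset.range c, w m * f n m + ∑ m ∈ Finset.Ico c T, w m * f n m
        = ∑ m ∈ Finset.range T, w m * f n m :=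
      Finset.sum_range_add_sum_Ico _ hcT
    have e4 : ∑ m ∈ Finset.Ico c T, w m * f n m
        = ∑ j ∈ Finset.range (T - c), w (c + j) * f n (c + j) :=
      Finset.sum_Ico_eq_sum_range _ _ _
    rw [e1, ← e3, e4]
  -- bounds
  have hb1 : |∑ m ∈ Finset.range c, w m * f n m| ≤ 2 * 2 * ε := by
    apply mono_piece_bound w (f n) 2 ε c hW2 (fun j _ => hf0 j)
      (fun j hj => hfε j (by omega))
    exact Or.inl (fun a b hab hbc => hinc a b hab hbc)
  have hb2 : |∑ j ∈ Finset.range (T - c), w (c + j) * f n (c + j)| ≤ 2 * 4 * ε := by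
    apply mono_piece_bound (fun j => w (c + j)) (fun j => f n (c + j)) 4 ε (T - c)
    · intro k
      have hIco : ∑ m ∈ Finset.Ico c (c + k), w m = ∑ m ∈ Finset.range k, w (c + m) := by
        have hck : c + k - c = k := by omega
        rw [Finset.sum_Ico_eq_sum_range, hck]
      have hcons := Finset.sum_range_add_sum_Ico w (Nat.le_add_right c k)
      have hsum2 : ∑ m ∈ Finset.range k, w (c + m)
          = (∑ m ∈ Finset.range (c + k), w m) - (∑ m ∈ Finset.range c, w m) := by
        rw [← hIco]
        linarith
      rw [hsum2]
      calc |(∑ m ∈ Finset.range (c + k), w m) - (∑ m ∈ Finset.range c, w m)|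
          ≤ |∑ m ∈ Finset.range (c + k), w m| + |∑ m ∈ Finset.range c, w m| := abs_sub _ _
        _ ≤ 2 + 2 := add_le_add (hW2 _) (hW2 _)
        _ = 4 := by norm_num
    · exact fun j _ => hf0 _
    · intro j hj
      exact hfε (c + j) (by omega)
    · exact Or.inr (fun a b hab hb => hdec (c + a) (c + b) (by omega) (by omega) (by omega))
  have hb3 : |w T * f n T| ≤ 2 * ε := by
    have hwT : |w T| ≤ 2 := by
      simp only [hw_def]
      have h1q : (0:ℝ) < (q:ℝ) := by positivity
      have h1q' : 1 / (q:ℝ) ≤ 1 := by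
        rw [div_le_one h1q]; exact_mod_cast hq.one_lt.le
      have h1q'' : (0:ℝ) ≤ 1/q := by positivity
      split <;> (rw [abs_le]; constructor <;> linarith)
    calc |w T * f n T| = |w T| * |f n T| := abs_mul _ _
      _ ≤ 2 * ε := by
          apply mul_le_mul hwT _ (abs_nonneg _) (by norm_num)
          rw [abs_of_nonneg (hf0 T)]
          exact hfε T le_rfl
  -- assemble
  have habs : |(∑ m ∈ Finset.range c, w m * f n m)
        + (∑ j ∈ Finset.range (T - c), w (c + j) * f n (c + j))
        + w T * f n T| ≤ 14 * ε := by
    calc |(∑ m ∈ Finset.range c, w m * f n m)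
        + (∑ j ∈ Finset.range (T - c), w (c + j) * f n (c + j))
        + w T * f n T|
        ≤ |(∑ m ∈ Finset.range c, w m * f n m)
            + (∑ j ∈ Finset.range (T - c), w (c + j) * f n (c + j))|
          + |w T * f n T| := abs_add_le _ _
      _ ≤ |∑ m ∈ Finset.range c, w m * f n m|
          + |∑ j ∈ Finset.range (T - c), w (c + j) * f n (c + j)|
          + |w T * f n T| := by
            have := abs_add_le (∑ m ∈ Finset.range c, w m * f n m)
              (∑ j ∈ Finset.range (T - c), w (c + j) * f n (c + j))
            linarith
      _ ≤ 14 * ε := by linarith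
  rw [Real.dist_eq, hfilter]
  have : (∑ m ∈ (Finset.range (q ^ n - 1)).filter
      (fun (m : ℕ) => (-1 : ZMod q) ^ m * ((m : ZMod q) + 1) = (p : ZMod q)), f n m) - 1 / q
      = (∑ m ∈ Finset.range c, w m * f n m)
        + (∑ j ∈ Finset.range (T - c), w (c + j) * f n (c + j))
        + w T * f n T := by rw [hstepB, hsplit]
  rw [this]
  have h14 : 14 * ε < ε' := by rw [hε_def]; linarith
  linarith
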